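/- The WMM I²E abstract machine enforces per-location SC on same-address load pairs: if a processor executes two loads L1 then L2 to the same address, and L1 reads the value of store S1 while L2 reads the value of store S2 with S1 ≠ S2, then S2 is not overwritten in the atomic memory before S1 is; equivalently, in the per-address total order in which stores update the atomic memory, S1 precedes or equals S2. -/

import Mathlib

/-- A store-buffer / invalidation-buffer entry, tagged with the identity of
the store that produced it. -/
structure TEnt where
  tag : ℕ
  addr : ℕ
  val : ℕ
  deriving DecidableEq

def hasA (l : List TEnt) (a : ℕ) : Prop := a ∈ l.map TEnt.addr

instance (l : List TEnt) (a : ℕ) : Decidable (hasA l a) :=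
  inferInstanceAs (Decidable (a ∈ l.map TEnt.addr))

def remA (l : List TEnt) (a : ℕ) : List TEnt := l.filter (fun e => e.addr ≠ a)

/-- State of the (tag-instrumented) WMM I²E machine.  Buffers keep the newest
entry at the head; the atomic memory records, for each address, the tag of the
store whose value it holds together with that value; `next` generates fresh
store tags. -/
structure TSt where
  mem : ℕ → ℕ × ℕ
  sb : ℕ → List TEnt
  ib : ℕ → List TEnt
  next : ℕ

/-- Observable labels: a load by processor `i` to address `a` returning the
value of the store with tag `t`, and the dequeue (memory update) of the store
with tag `t` to address `a`. -/
inductive TLab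
  | load (i a t : ℕ)
  | deq (t a : ℕ)
  | tau
  deriving DecidableEq

inductive TStep : TSt → TLab → TSt → Prop
  | store (s : TSt) (i a v : ℕ) :
      TStep s .tau
        { mem := s.mem,
          sb := Function.update s.sb i (⟨s.next, a, v⟩ :: s.sb i),
          ib := Function.update s.ib i (remA (s.ib i) a),
          next := s.next + 1 }
  | ldSb (s : TSt) (i : ℕ) (e : TEnt) (l1 l2 : List TEnt)
      (hsb : s.sb i = l1 ++ e :: l2) (hy : ¬ hasA l1 e.addr) :
      TStep s (.load i e.addr e.tag) s
  | ldMem (s : TSt) (i a : ℕ) (h : ¬ hasA (s.sb i) a) :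
      TStep s (.load i a (s.mem a).1)
        { s with ib := Function.update s.ib i (remA (s.ib i) a) }
  | ldIb (s : TSt) (i : ℕ) (e : TEnt) (l1 l2 : List TEnt)
      (h : ¬ hasA (s.sb i) e.addr) (hib : s.ib i = l1 ++ e :: l2) :
      TStep s (.load i e.addr e.tag)
        { s with ib := Function.update s.ib i (l1 ++ e :: remA l2 e.addr) }
  | commit (s : TSt) (i : ℕ) (h : s.sb i = []) : TStep s .tau s
  | reconcile (s : TSt) (i : ℕ) :
      TStep s .tau { s with ib := Function.update s.ib i [] }
  | deqSb (s : TSt) (i : ℕ) (e : TEnt) (l1 l2 : List TEnt)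
      (hsb : s.sb i = l1 ++ e :: l2) (hold : ¬ hasA l2 e.addr) :
      TStep s (.deq e.tag e.addr)
        { mem := Function.update s.mem e.addr (e.tag, e.val),
          sb := Function.update s.sb i (l1 ++ l2),
          ib := fun j => if j = i ∨ hasA (s.sb j) e.addr then s.ib j
                         else ⟨(s.mem e.addr).1, e.addr, (s.mem e.addr).2⟩ :: s.ib j,
          next := s.next }

/-- A trace of labeled steps. -/
inductive TSteps : TSt → List TLab → TSt → Prop
  | nil (s : TSt) : TSteps s [] s
  | cons {s1 s2 s3 : TSt} {l : TLab} {ls : List TLab} :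
      TStep s1 l s2 → TSteps s2 ls s3 → TSteps s1 (l :: ls) s3

def TInit (m0 : ℕ → ℕ) : TSt :=
  { mem := fun a => (0, m0 a), sb := fun _ => [], ib := fun _ => [], next := 1 }

-- ===================== auxiliary development =====================

def DqAt (tr : List TLab) (q t b : ℕ) : Prop := tr[q]? = some (.deq t b)

def NoDq (tr : List TLab) (t : ℕ) : Prop := ∀ q b, ¬ DqAt tr q t b

def Aft (tr : List TLab) (q1 t' : ℕ) : Prop := ∀ q' b', DqAt tr q' t' b' → q1 < q'

def Vis (s : TSt) (i a t' : ℕ) : Prop :=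
  (∃ l1 e l2, s.sb i = l1 ++ e :: l2 ∧ ¬ hasA l1 a ∧ e.addr = a ∧ t' = e.tag)
  ∨ (¬ hasA (s.sb i) a ∧ (t' = (s.mem a).1 ∨ ∃ d, d ∈ s.ib i ∧ d.addr = a ∧ t' = d.tag))

def KC (tr : List TLab) (s : TSt) (i a t : ℕ) : Prop :=
  t = 0
  ∨ (NoDq tr t ∧ ∃ e, e ∈ s.sb i ∧ e.tag = t ∧ e.addr = a)
  ∨ (∃ q1, DqAt tr q1 t a ∧ ∀ t', Vis s i a t' → t' = t ∨ Aft tr q1 t')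

def PairC (tr : List TLab) (s : TSt) (i a t1 t2 : ℕ) : Prop :=
  t1 = 0
  ∨ (NoDq tr t1 ∧ NoDq tr t2 ∧ ∃ u e2 v e1 w, s.sb i = u ++ e2 :: v ++ e1 :: w
      ∧ e1.tag = t1 ∧ e1.addr = a ∧ e2.tag = t2 ∧ e2.addr = a)
  ∨ (∃ q1, DqAt tr q1 t1 a ∧ Aft tr q1 t2)

structure WInv (tr : List TLab) (s : TSt) : Prop where
  w0 : 1 ≤ s.next
  w1 : ∀ j, ((s.sb j).map TEnt.tag).Nodup
  w2 : ∀ j k, j ≠ k → ∀ d ∈ s.sb j, ∀ d' ∈ s.sb k, d.tag ≠ d'.tag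
  w3 : ∀ j d, d ∈ s.sb j → 1 ≤ d.tag ∧ d.tag < s.next
  w4 : ∀ q t b, DqAt tr q t b → 1 ≤ t ∧ t < s.next ∧ ∀ j d, d ∈ s.sb j → d.tag ≠ t
  w5 : ∀ q q' t b b', DqAt tr q t b → DqAt tr q' t b' → q = q'
  w6 : ∀ b, (s.mem b).1 = 0 ∨ ∃ q, DqAt tr q (s.mem b).1 b
  w7 : ∀ j b, hasA (s.sb j) b → ¬ hasA (s.ib j) b
  w8a : ∀ j d, d ∈ s.ib j → d.tag = 0 ∨ ∃ q, DqAt tr q d.tag d.addr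
  w8b : ∀ j, (s.ib j).Pairwise
      (fun d d' => d.addr = d'.addr →
        ∀ q q' b b', DqAt tr q d'.tag b → DqAt tr q' d.tag b' → q < q')
  w8c : ∀ j d, d ∈ s.ib j →
      ∀ q q' b b', DqAt tr q d.tag b → DqAt tr q' (s.mem d.addr).1 b' → q < q'
  kc : ∀ (p : ℕ) i a t, tr[p]? = some (TLab.load i a t) → KC tr s i a t
  pc : ∀ (p1 p2 : ℕ) i a t1 t2, p1 < p2 →
      tr[p1]? = some (TLab.load i a t1) → tr[p2]? = some (TLab.load i a t2) →
      t1 ≠ t2 → PairC tr s i a t1 t2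

-- basic trace lemmas

lemma dqAt_lt {tr : List TLab} {q t b : ℕ} (h : DqAt tr q t b) : q < tr.length := by
  by_contra hc
  rw [DqAt, List.getElem?_eq_none_iff.2 (le_of_not_gt hc)] at h
  cases h

lemma dqAt_ext {tr : List TLab} {x : TLab} {q t b : ℕ} (h : DqAt tr q t b) :
    DqAt (tr ++ [x]) q t b := by
  rw [DqAt, List.getElem?_append_left (dqAt_lt h)]; exact h

lemma getq_snoc_cases {tr : List TLab} {x y : TLab} {q : ℕ}
    (h : (tr ++ [x])[q]? = some y) :
    tr[q]? = some y ∨ (q = tr.length ∧ y = x) := by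
  rcases lt_trichotomy q tr.length with hq | hq | hq
  · left; rw [List.getElem?_append_left hq] at h; exact h
  · right; subst hq; rw [List.getElem?_concat_length] at h
    exact ⟨rfl, (Option.some_inj.1 h).symm⟩
  · exfalso
    rw [List.getElem?_eq_none_iff.2 (by simp; omega)] at h
    cases h

lemma dqAt_snoc {tr : List TLab} {x : TLab} {q t b : ℕ} (h : DqAt (tr ++ [x]) q t b) :
    DqAt tr q t b ∨ (q = tr.length ∧ x = .deq t b) := by
  rcases getq_snoc_cases h with h' | ⟨h1, h2⟩
  · exact Or.inl h'
  · exact Or.inr ⟨h1, h2.symm⟩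

lemma noDq_snoc {tr : List TLab} {x : TLab} {t : ℕ} (h : NoDq tr t)
    (hx : ∀ u b, x ≠ TLab.deq u b) : NoDq (tr ++ [x]) t := by
  intro q b hd
  rcases dqAt_snoc hd with h' | ⟨_, h'⟩
  · exact h q b h'
  · exact hx t b h'

lemma aft_snoc {tr : List TLab} {x : TLab} {q1 t' : ℕ} (hlt : q1 < tr.length)
    (h : Aft tr q1 t') : Aft (tr ++ [x]) q1 t' := by
  intro q' b' hd
  rcases dqAt_snoc hd with h' | ⟨hq, _⟩
  · exact h q' b' h'
  · omega

lemma aft_of_noDq {tr : List TLab} {q1 t' : ℕ} (h : NoDq tr t') : Aft tr q1 t' :=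
  fun q' b' hd => absurd hd (h q' b')

-- list lemmas

lemma hasA_iff {l : List TEnt} {a : ℕ} : hasA l a ↔ ∃ e ∈ l, e.addr = a := by
  simp [hasA]

lemma mem_remA {l : List TEnt} {a : ℕ} {e : TEnt} :
    e ∈ remA l a ↔ e ∈ l ∧ e.addr ≠ a := by
  simp [remA]

lemma hasA_cons {x : TEnt} {l : List TEnt} {b : ℕ} :
    hasA (x :: l) b ↔ x.addr = b ∨ hasA l b := by
  simp [hasA]
  rw [eq_comm]

lemma not_hasA_remA {l : List TEnt} {a : ℕ} : ¬ hasA (remA l a) a := by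
  rw [hasA_iff]
  rintro ⟨e, he, ha⟩
  exact (mem_remA.1 he).2 ha

lemma remA_sublist (l : List TEnt) (a : ℕ) : (remA l a).Sublist l :=
  List.filter_sublist

lemma tag_inj {l : List TEnt} (hn : (l.map TEnt.tag).Nodup)
    {x y : TEnt} (hx : x ∈ l) (hy : y ∈ l) (ht : x.tag = y.tag) : x = y :=
  List.inj_on_of_nodup_map hn hx hy ht

lemma splitAlign : ∀ (l1 u : List TEnt) (d e : TEnt) (l2 v : List TEnt),
    ((l1 ++ d :: l2).map TEnt.tag).Nodup → l1 ++ d :: l2 = u ++ e :: v →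
    d.tag = e.tag → l1 = u ∧ d = e ∧ l2 = v := by
  intro l1
  induction l1 with
  | nil =>
    intro u d e l2 v hn he ht
    cases u with
    | nil => simp_all
    | cons b us =>
      exfalso
      injection he with hdb h2
      have he2 : e ∈ l2 := by rw [h2]; simp
      simp only [List.nil_append, List.map_cons, List.nodup_cons] at hn
      exact hn.1 (by rw [ht]; exact List.mem_map_of_mem (f := TEnt.tag) he2)
  | cons x xs ih =>
    intro u d e l2 v hn he ht
    cases u with
    | nil =>
      exfalso
      simp only [List.nil_append] at he
      -- x :: xs ++ d :: l2 = e :: v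
      have hx : x = e := by
        have := congrArg (fun l : List TEnt => l[0]?) he
        simpa using this
      have hd : d ∈ xs ++ d :: l2 := by simp
      simp only [List.cons_append, List.map_cons, List.nodup_cons] at hn
      apply hn.1
      rw [hx, ← ht]
      exact List.mem_map_of_mem (f := TEnt.tag) hd
    | cons b us =>
      simp only [List.cons_append] at he
      have hx : x = b := (List.cons.injEq _ _ _ _ ▸ he).1
      have htl : xs ++ d :: l2 = us ++ e :: v := (List.cons.injEq _ _ _ _ ▸ he).2
      have hn' : ((xs ++ d :: l2).map TEnt.tag).Nodup := by
        simp only [List.cons_append, List.map_cons, List.nodup_cons] at hn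
        exact hn.2
      obtain ⟨h1, h2, h3⟩ := ih us d e l2 v hn' htl ht
      exact ⟨by rw [hx, h1], h2, h3⟩

lemma mem_of_removed {l1 l2 : List TEnt} {d e : TEnt}
    (h : e ∈ l1 ++ d :: l2) (hne : e ≠ d) : e ∈ l1 ++ l2 := by
  simp at h ⊢
  tauto

lemma dqAt_snoc_nondeq {tr : List TLab} {x : TLab} {q t b : ℕ}
    (hx : ∀ u c, x ≠ TLab.deq u c) (h : DqAt (tr ++ [x]) q t b) : DqAt tr q t b := by
  rcases dqAt_snoc h with h' | ⟨_, h'⟩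
  · exact h'
  · exact absurd h' (hx t b)

lemma vis_mono {s s' : TSt} {i a t' : ℕ} (hmem : s'.mem a = s.mem a)
    (hsb : s'.sb i = s.sb i) (hib : (s'.ib i).Sublist (s.ib i))
    (h : Vis s' i a t') : Vis s i a t' := by
  rcases h with ⟨l1, e, l2, hd, hy, ha, ht⟩ | ⟨hna, h⟩
  · exact Or.inl ⟨l1, e, l2, by rw [← hsb]; exact hd, hy, ha, ht⟩
  · refine Or.inr ⟨by rw [← hsb]; exact hna, ?_⟩
    rcases h with h | ⟨d, hd, ha, ht⟩
    · exact Or.inl (by rw [← hmem]; exact h)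
    · exact Or.inr ⟨d, hib.subset hd, ha, ht⟩

lemma KC_ext {tr : List TLab} {x : TLab} {s s' : TSt} {i a t : ℕ}
    (hx : ∀ u b, x ≠ TLab.deq u b)
    (hsb : s'.sb i = s.sb i) (hvis : ∀ t', Vis s' i a t' → Vis s i a t')
    (h : KC tr s i a t) : KC (tr ++ [x]) s' i a t := by
  rcases h with h0 | ⟨hnd, e, he, h1, h2⟩ | ⟨q1, hq, hv⟩
  · exact Or.inl h0
  · exact Or.inr (Or.inl ⟨noDq_snoc hnd hx, e, by rw [hsb]; exact he, h1, h2⟩)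
  · refine Or.inr (Or.inr ⟨q1, dqAt_ext hq, ?_⟩)
    intro t' ht'
    rcases hv t' (hvis t' ht') with h | h
    · exact Or.inl h
    · exact Or.inr (aft_snoc (dqAt_lt hq) h)

lemma PairC_ext {tr : List TLab} {x : TLab} {s s' : TSt} {i a t1 t2 : ℕ}
    (hx : ∀ u b, x ≠ TLab.deq u b) (hsb : s'.sb i = s.sb i)
    (h : PairC tr s i a t1 t2) : PairC (tr ++ [x]) s' i a t1 t2 := by
  rcases h with h0 | ⟨hn1, hn2, u, e2, v, e1, w, hd, a1, a2, a3, a4⟩ | ⟨q1, hq, ha⟩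
  · exact Or.inl h0
  · exact Or.inr (Or.inl ⟨noDq_snoc hn1 hx, noDq_snoc hn2 hx,
      u, e2, v, e1, w, by rw [hsb]; exact hd, a1, a2, a3, a4⟩)
  · exact Or.inr (Or.inr ⟨q1, dqAt_ext hq, aft_snoc (dqAt_lt hq) ha⟩)

/-- Master lemma for steps that do not dequeue and only shrink invalidation
buffers (commit, reconcile, ldSb, ldMem, ldIb). -/
lemma winv_master {tr : List TLab} {x : TLab} {s s' : TSt}
    (hx : ∀ u b, x ≠ TLab.deq u b)
    (hmem : s'.mem = s.mem) (hsb : s'.sb = s.sb) (hnext : s'.next = s.next)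
    (hib : ∀ j, (s'.ib j).Sublist (s.ib j))
    (hinv : WInv tr s)
    (hkc : ∀ i a t, x = TLab.load i a t → KC (tr ++ [x]) s' i a t)
    (hpc : ∀ (p1 : ℕ) i a t1 t2, tr[p1]? = some (TLab.load i a t1) →
        x = TLab.load i a t2 → t1 ≠ t2 → PairC (tr ++ [x]) s' i a t1 t2) :
    WInv (tr ++ [x]) s' := by
  have hvis : ∀ i a t', Vis s' i a t' → Vis s i a t' :=
    fun i a t' => vis_mono (by rw [hmem]) (by rw [hsb]) (hib i)
  constructor
  · rw [hnext]; exact hinv.w0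
  · intro j; rw [hsb]; exact hinv.w1 j
  · intro j k hjk; rw [hsb]; exact hinv.w2 j k hjk
  · intro j d hd; rw [hnext]; exact hinv.w3 j d (by rw [hsb] at hd; exact hd)
  · intro q t b hdq
    have := hinv.w4 q t b (dqAt_snoc_nondeq hx hdq)
    exact ⟨this.1, by rw [hnext]; exact this.2.1,
      fun j d hd => this.2.2 j d (by rw [hsb] at hd; exact hd)⟩
  · intro q q' t b b' h1 h2
    exact hinv.w5 q q' t b b' (dqAt_snoc_nondeq hx h1) (dqAt_snoc_nondeq hx h2)
  · intro b
    rcases hinv.w6 b with h | ⟨q, hq⟩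
    · exact Or.inl (by rw [hmem]; exact h)
    · exact Or.inr ⟨q, by rw [hmem]; exact dqAt_ext hq⟩
  · intro j b hb hib'
    have h1 : hasA (s.sb j) b := by rw [← hsb]; exact hb
    rcases hasA_iff.1 hib' with ⟨e, he, ha⟩
    exact hinv.w7 j b h1 (hasA_iff.2 ⟨e, (hib j).subset he, ha⟩)
  · intro j d hd
    rcases hinv.w8a j d ((hib j).subset hd) with h | ⟨q, hq⟩
    · exact Or.inl h
    · exact Or.inr ⟨q, dqAt_ext hq⟩
  · intro j
    refine List.Pairwise.sublist (hib j) (List.Pairwise.imp ?_ (hinv.w8b j))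
    intro d d' h haddr q q' b b' h1 h2
    exact h haddr q q' b b' (dqAt_snoc_nondeq hx h1) (dqAt_snoc_nondeq hx h2)
  · intro j d hd q q' b b' h1 h2
    rw [hmem] at h2
    exact hinv.w8c j d ((hib j).subset hd) q q' b b'
      (dqAt_snoc_nondeq hx h1) (dqAt_snoc_nondeq hx h2)
  · intro p i a t hp
    rcases getq_snoc_cases hp with hold | ⟨hpl, hxl⟩
    · exact KC_ext hx (by rw [hsb]) (hvis i a) (hinv.kc p i a t hold)
    · exact hkc i a t hxl.symm
  · intro p1 p2 i a t1 t2 hlt h1 h2 hne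
    rcases getq_snoc_cases h2 with hold2 | ⟨hp2, hxl⟩
    · have h1' : tr[p1]? = some (TLab.load i a t1) := by
        rcases getq_snoc_cases h1 with h | ⟨hp1, _⟩
        · exact h
        · exfalso
          have hl2 : p2 < tr.length := by
            by_contra hc
            rw [List.getElem?_eq_none_iff.2 (le_of_not_gt hc)] at hold2
            cases hold2
          omega
      exact PairC_ext hx (by rw [hsb]) (hinv.pc p1 p2 i a t1 t2 hlt h1' hold2 hne)
    · have h1' : tr[p1]? = some (TLab.load i a t1) := by
        rcases getq_snoc_cases h1 with h | ⟨hp1, _⟩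
        · exact h
        · exfalso
          have hl2 : p2 < (tr ++ [x]).length := by
            by_contra hc
            rw [List.getElem?_eq_none_iff.2 (le_of_not_gt hc)] at h2
            cases h2
          simp at hl2; omega
      exact hpc p1 i a t1 t2 h1' hxl.symm hne

lemma load_ne_deq (i a t : ℕ) : ∀ u b, TLab.load i a t ≠ TLab.deq u b := by
  intro u b h; cases h

lemma tau_ne_deq : ∀ u b, TLab.tau ≠ TLab.deq u b := by
  intro u b h; cases h

lemma noDq_sb {tr : List TLab} {s : TSt} (hinv : WInv tr s) {j : ℕ} {e : TEnt}
    (he : e ∈ s.sb j) : NoDq tr e.tag :=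
  fun q b hd => (hinv.w4 q e.tag b hd).2.2 j e he rfl

lemma winv_commit {tr : List TLab} {s : TSt} (hinv : WInv tr s) :
    WInv (tr ++ [TLab.tau]) s := by
  refine winv_master (s := s) tau_ne_deq rfl rfl rfl (fun j => List.Sublist.refl _) hinv ?_ ?_
  · intro i a t h; cases h
  · intro p1 i a t1 t2 _ h; cases h

lemma winv_reconcile {tr : List TLab} {s : TSt} (hinv : WInv tr s) (i : ℕ) :
    WInv (tr ++ [TLab.tau]) { s with ib := Function.update s.ib i [] } := by
  refine winv_master (s := s) tau_ne_deq rfl rfl rfl ?_ hinv ?_ ?_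
  · intro j
    show (Function.update s.ib i [] j).Sublist (s.ib j)
    by_cases hj : j = i
    · subst hj; simp only [Function.update_self]; exact List.nil_sublist _
    · simp only [Function.update_of_ne hj]; exact List.Sublist.refl _
  · intro i a t h; cases h
  · intro p1 i a t1 t2 _ h; cases h

lemma winv_ldSb {tr : List TLab} {s : TSt} (hinv : WInv tr s) (i : ℕ) (e : TEnt)
    (l1 l2 : List TEnt) (hsb : s.sb i = l1 ++ e :: l2) (hy : ¬ hasA l1 e.addr) :
    WInv (tr ++ [TLab.load i e.addr e.tag]) s := by
  have hemem : e ∈ s.sb i := by rw [hsb]; simp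
  refine winv_master (s := s) (load_ne_deq _ _ _) rfl rfl rfl
    (fun j => List.Sublist.refl _) hinv ?_ ?_
  · -- new kc obligation
    intro i' a' t' hl
    obtain ⟨rfl, rfl, rfl⟩ := TLab.load.inj hl
    exact Or.inr (Or.inl ⟨noDq_snoc (noDq_sb hinv hemem) (load_ne_deq _ _ _),
      e, hemem, rfl, rfl⟩)
  · -- new pc obligation
    intro p1 i' a' t1 t2 h1 hl hne
    obtain ⟨rfl, rfl, rfl⟩ := TLab.load.inj hl
    rcases hinv.kc p1 i e.addr t1 h1 with h0 | ⟨hnd, e1, he1, htag, haddr⟩ | ⟨q1, hq, hv⟩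
    · exact Or.inl h0
    · rw [hsb] at he1
      rcases List.mem_append.1 he1 with hin1 | hin2
      · exact absurd (hasA_iff.2 ⟨e1, hin1, haddr⟩) hy
      rcases List.mem_cons.1 hin2 with heq | hin2
      · exact absurd (show t1 = e.tag by rw [← htag, heq]) hne
      · rcases List.append_of_mem hin2 with ⟨xs, ys, hxy⟩
        refine Or.inr (Or.inl ⟨noDq_snoc hnd (load_ne_deq _ _ _),
          noDq_snoc (noDq_sb hinv hemem) (load_ne_deq _ _ _),
          l1, e, xs, e1, ys, ?_, htag, haddr, rfl, rfl⟩)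
        rw [hsb, hxy]; simp
    · have hvise : Vis s i e.addr e.tag := Or.inl ⟨l1, e, l2, hsb, hy, rfl, rfl⟩
      rcases hv e.tag hvise with heq | haft
      · exact absurd heq.symm hne
      · exact Or.inr (Or.inr ⟨q1, dqAt_ext hq, aft_snoc (dqAt_lt hq) haft⟩)

lemma winv_ldMem {tr : List TLab} {s : TSt} (hinv : WInv tr s) (i a : ℕ)
    (h : ¬ hasA (s.sb i) a) :
    WInv (tr ++ [TLab.load i a (s.mem a).1])
      { s with ib := Function.update s.ib i (remA (s.ib i) a) } := by
  refine winv_master (s := s) (load_ne_deq _ _ _) rfl rfl rfl ?_ hinv ?_ ?_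
  · intro j
    show (Function.update s.ib i (remA (s.ib i) a) j).Sublist (s.ib j)
    by_cases hj : j = i
    · subst hj; simp only [Function.update_self]; exact remA_sublist _ _
    · simp only [Function.update_of_ne hj]; exact List.Sublist.refl _
  · intro i' a' t' hl
    obtain ⟨rfl, rfl, rfl⟩ := TLab.load.inj hl
    by_cases h0 : (s.mem a).1 = 0
    · exact Or.inl h0
    rcases hinv.w6 a with h6 | ⟨q1, hq⟩
    · exact absurd h6 h0
    refine Or.inr (Or.inr ⟨q1, dqAt_ext hq, ?_⟩)
    intro t'' hvis
    rcases hvis with ⟨g1, f, g2, hd, hyy, haf, htf⟩ | ⟨hna, hmm | ⟨d, hd, ha, ht⟩⟩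
    · exact absurd (hasA_iff.2 ⟨f, by
        show f ∈ s.sb i; rw [show s.sb i = g1 ++ f :: g2 from hd]; simp, haf⟩) h
    · exact Or.inl hmm
    · exfalso
      have hd2 : d ∈ remA (s.ib i) a := by
        simpa only [Function.update_self] using hd
      exact (mem_remA.1 hd2).2 ha
  · intro p1 i' a' t1 t2 h1 hl hne
    obtain ⟨rfl, rfl, rfl⟩ := TLab.load.inj hl
    rcases hinv.kc p1 i a t1 h1 with h0 | ⟨hnd, e1, he1, htag, haddr⟩ | ⟨q1, hq, hv⟩
    · exact Or.inl h0
    · exact absurd (hasA_iff.2 ⟨e1, he1, haddr⟩) h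
    · rcases hv _ (Or.inr ⟨h, Or.inl rfl⟩) with heq | haft
      · exact absurd heq.symm hne
      · exact Or.inr (Or.inr ⟨q1, dqAt_ext hq, aft_snoc (dqAt_lt hq) haft⟩)

lemma winv_ldIb {tr : List TLab} {s : TSt} (hinv : WInv tr s) (i : ℕ) (e : TEnt)
    (l1 l2 : List TEnt) (h : ¬ hasA (s.sb i) e.addr) (hib : s.ib i = l1 ++ e :: l2) :
    WInv (tr ++ [TLab.load i e.addr e.tag])
      { s with ib := Function.update s.ib i (l1 ++ e :: remA l2 e.addr) } := by
  have hemem : e ∈ s.ib i := by rw [hib]; simp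
  refine winv_master (s := s) (load_ne_deq _ _ _) rfl rfl rfl ?_ hinv ?_ ?_
  · intro j
    show (Function.update s.ib i (l1 ++ e :: remA l2 e.addr) j).Sublist (s.ib j)
    by_cases hj : j = i
    · subst hj; simp only [Function.update_self]
      rw [hib]
      exact ((remA_sublist l2 e.addr).cons₂ e).append_left l1
    · simp only [Function.update_of_ne hj]; exact List.Sublist.refl _
  · intro i' a' t' hl
    obtain ⟨rfl, rfl, rfl⟩ := TLab.load.inj hl
    by_cases h0 : e.tag = 0
    · exact Or.inl h0
    rcases hinv.w8a i e hemem with h8 | ⟨q1, hq⟩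
    · exact absurd h8 h0
    refine Or.inr (Or.inr ⟨q1, dqAt_ext hq, ?_⟩)
    intro t'' hvis
    by_cases hteq : t'' = e.tag
    · exact Or.inl hteq
    right
    rcases hvis with ⟨g1, f, g2, hd, hyy, haf, htf⟩ | ⟨hna, hmm | ⟨d, hd, ha, ht⟩⟩
    · exact absurd (hasA_iff.2 ⟨f, by
        show f ∈ s.sb i; rw [show s.sb i = g1 ++ f :: g2 from hd]; simp, haf⟩) h
    · refine aft_snoc (dqAt_lt hq) ?_
      intro q' b' h'
      exact hinv.w8c i e hemem q1 q' e.addr b' hq (by rw [← hmm]; exact h')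
    · have hd' : d ∈ l1 ++ e :: remA l2 e.addr := by
        simpa only [Function.update_self] using hd
      rcases List.mem_append.1 hd' with hdl1 | hdl2
      · refine aft_snoc (dqAt_lt hq) ?_
        intro q' b' h'
        have hpw := hinv.w8b i
        rw [hib] at hpw
        have hcross := (List.pairwise_append.1 hpw).2.2 d hdl1 e (by simp)
        exact hcross (by rw [ha]) q1 q' e.addr b' hq (by rw [← ht]; exact h')
      rcases List.mem_cons.1 hdl2 with heq | hrem
      · exact absurd (by rw [ht, heq]) hteq
      · exact absurd ha (mem_remA.1 hrem).2
  · intro p1 i' a' t1 t2 h1 hl hne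
    obtain ⟨rfl, rfl, rfl⟩ := TLab.load.inj hl
    rcases hinv.kc p1 i e.addr t1 h1 with h0 | ⟨hnd, e1, he1, htag, haddr⟩ | ⟨q1, hq, hv⟩
    · exact Or.inl h0
    · exact absurd (hasA_iff.2 ⟨e1, he1, haddr⟩) h
    · rcases hv _ (Or.inr ⟨h, Or.inr ⟨e, hemem, rfl, rfl⟩⟩) with heq | haft
      · exact absurd heq.symm hne
      · exact Or.inr (Or.inr ⟨q1, dqAt_ext hq, aft_snoc (dqAt_lt hq) haft⟩)

lemma winv_store {tr : List TLab} {s : TSt} (hinv : WInv tr s) (i a v : ℕ) :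
    WInv (tr ++ [TLab.tau])
      { mem := s.mem,
        sb := Function.update s.sb i (⟨s.next, a, v⟩ :: s.sb i),
        ib := Function.update s.ib i (remA (s.ib i) a),
        next := s.next + 1 } := by
  set E : TEnt := ⟨s.next, a, v⟩ with hE
  have hsbj : ∀ j, Function.update s.sb i (E :: s.sb i) j
      = if j = i then E :: s.sb j else s.sb j := by
    intro j; by_cases hj : j = i
    · subst hj; simp
    · simp [hj]
  have hibj : ∀ j, Function.update s.ib i (remA (s.ib i) a) j
      = if j = i then remA (s.ib j) a else s.ib j := by
    intro j; by_cases hj : j = i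
    · subst hj; simp
    · simp [hj]
  have hsbmem : ∀ j d, d ∈ Function.update s.sb i (E :: s.sb i) j →
      d = E ∨ d ∈ s.sb j := by
    intro j d hd
    rw [hsbj] at hd
    by_cases hj : j = i
    · rw [if_pos hj] at hd; exact List.mem_cons.1 hd
    · rw [if_neg hj] at hd; exact Or.inr hd
  have hibsub : ∀ j, (Function.update s.ib i (remA (s.ib i) a) j).Sublist (s.ib j) := by
    intro j
    rw [hibj]
    by_cases hj : j = i
    · rw [if_pos hj]; exact remA_sublist _ _
    · rw [if_neg hj]
  constructor
  · -- w0
    exact le_trans hinv.w0 (Nat.le_succ _)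
  · -- w1
    intro j
    dsimp only
    rw [hsbj]
    by_cases hj : j = i
    · rw [if_pos hj]
      refine List.Nodup.cons ?_ (hinv.w1 j)
      intro hmem
      rcases List.mem_map.1 hmem with ⟨d, hd, hdt⟩
      exact Nat.ne_of_lt (hinv.w3 j d hd).2 (show d.tag = s.next from hdt)
    · rw [if_neg hj]; exact hinv.w1 j
  · -- w2
    intro j k hjk d hd d' hd' heq
    dsimp only at hd hd'
    rcases hsbmem j d hd with rfl | hd
    · rcases hsbmem k d' hd' with rfl | hd'
      · -- both are E: but then d.tag = d'.tag trivially; need contradiction? j ≠ k but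
        -- E can be added to only one buffer (j = i and k = i), contradiction
        have hj : j = i := by
          by_contra hj
          rw [hsbj, if_neg hj] at hd
          exact absurd rfl (Nat.ne_of_lt (hinv.w3 j E hd).2)
        have hk : k = i := by
          by_contra hk
          rw [hsbj, if_neg hk] at hd'
          exact absurd rfl (Nat.ne_of_lt (hinv.w3 k E hd').2)
        exact hjk (hj.trans hk.symm)
      · exact absurd heq.symm (Nat.ne_of_lt (hinv.w3 k d' hd').2)
    · rcases hsbmem k d' hd' with rfl | hd'
      · exact absurd heq (Nat.ne_of_lt (hinv.w3 j d hd).2)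
      · exact hinv.w2 j k hjk d hd d' hd' heq
  · -- w3
    intro j d hd
    dsimp only at hd ⊢
    rcases hsbmem j d hd with rfl | hd
    · exact ⟨hinv.w0, Nat.lt_succ_self _⟩
    · exact ⟨(hinv.w3 j d hd).1, Nat.lt_succ_of_lt (hinv.w3 j d hd).2⟩
  · -- w4
    intro q t b hdq
    have h4 := hinv.w4 q t b (dqAt_snoc_nondeq tau_ne_deq hdq)
    refine ⟨h4.1, Nat.lt_succ_of_lt h4.2.1, ?_⟩
    intro j d hd
    dsimp only at hd
    rcases hsbmem j d hd with rfl | hd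
    · exact Nat.ne_of_gt h4.2.1
    · exact h4.2.2 j d hd
  · -- w5
    intro q q' t b b' h1 h2
    exact hinv.w5 q q' t b b' (dqAt_snoc_nondeq tau_ne_deq h1) (dqAt_snoc_nondeq tau_ne_deq h2)
  · -- w6
    intro b
    rcases hinv.w6 b with h | ⟨q, hq⟩
    · exact Or.inl h
    · exact Or.inr ⟨q, dqAt_ext hq⟩
  · -- w7
    intro j b hb hibb
    dsimp only at hb hibb
    rw [hsbj] at hb
    rw [hibj] at hibb
    by_cases hj : j = i
    · rw [if_pos hj] at hb
      rw [if_pos hj] at hibb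
      by_cases hba : b = a
      · subst hba; exact not_hasA_remA hibb
      · have hb' : hasA (s.sb j) b := by
          rcases hasA_cons.1 hb with h | h
          · exact absurd h (by simp [hE]; exact fun hh => hba hh.symm)
          · exact h
        rcases hasA_iff.1 hibb with ⟨d, hd, hda⟩
        exact hinv.w7 j b hb' (hasA_iff.2 ⟨d, (mem_remA.1 hd).1, hda⟩)
    · rw [if_neg hj] at hb
      rw [if_neg hj] at hibb
      exact hinv.w7 j b hb hibb
  · -- w8a
    intro j d hd
    dsimp only at hd
    rcases hinv.w8a j d ((hibsub j).subset hd) with h | ⟨q, hq⟩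
    · exact Or.inl h
    · exact Or.inr ⟨q, dqAt_ext hq⟩
  · -- w8b
    intro j
    dsimp only
    refine List.Pairwise.sublist (hibsub j) (List.Pairwise.imp ?_ (hinv.w8b j))
    intro d d' h haddr q q' b b' h1 h2
    exact h haddr q q' b b' (dqAt_snoc_nondeq tau_ne_deq h1) (dqAt_snoc_nondeq tau_ne_deq h2)
  · -- w8c
    intro j d hd q q' b b' h1 h2
    dsimp only at hd h2
    exact hinv.w8c j d ((hibsub j).subset hd) q q' b b'
      (dqAt_snoc_nondeq tau_ne_deq h1) (dqAt_snoc_nondeq tau_ne_deq h2)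
  · -- kc
    intro p i' a' t hp
    rcases getq_snoc_cases hp with hold | ⟨_, hxl⟩
    swap
    · cases hxl
    have hkc := hinv.kc p i' a' t hold
    by_cases hii : i' = i
    swap
    · -- other processor: nothing changes
      refine KC_ext tau_ne_deq ?_ ?_ hkc
      · show Function.update s.sb i (E :: s.sb i) i' = s.sb i'
        rw [hsbj, if_neg hii]
      · intro t' hv
        refine vis_mono ?_ ?_ ?_ hv
        · rfl
        · show Function.update s.sb i (E :: s.sb i) i' = s.sb i'
          rw [hsbj, if_neg hii]
        · exact hibsub i'
    subst hii
    rcases hkc with h0 | ⟨hnd, e1, he1, htag, haddr⟩ | ⟨q1, hq, hv⟩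
    · exact Or.inl h0
    · refine Or.inr (Or.inl ⟨noDq_snoc hnd tau_ne_deq, e1, ?_, htag, haddr⟩)
      show e1 ∈ Function.update s.sb i' (E :: s.sb i') i'
      rw [hsbj, if_pos rfl]
      exact List.mem_cons_of_mem _ he1
    · refine Or.inr (Or.inr ⟨q1, dqAt_ext hq, ?_⟩)
      intro t' hvis
      rcases hvis with ⟨g1, f, g2, hd, hyy, haf, htf⟩ | ⟨hna, hmm | ⟨d, hd, hda, hdt⟩⟩
      · -- from the (new) store buffer
        dsimp only at hd
        rw [show (Function.update s.sb i' (E :: s.sb i') i' : List TEnt) = E :: s.sb i' by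
          rw [hsbj, if_pos rfl]] at hd
        cases g1 with
        | nil =>
          -- f is the fresh entry
          simp only [List.nil_append] at hd
          have hfE : f = E := (List.cons.injEq _ _ _ _ ▸ hd).1.symm
          right
          refine aft_snoc (dqAt_lt hq) ?_
          intro q' b' h'
          exfalso
          have := (hinv.w4 q' t' b' h').2.1
          rw [htf, hfE] at this
          exact absurd this (lt_irrefl _)
        | cons x g1' =>
          simp only [List.cons_append] at hd
          have hxE : x = E := (List.cons.injEq _ _ _ _ ▸ hd).1.symm
          have htl : s.sb i' = g1' ++ f :: g2 := (List.cons.injEq _ _ _ _ ▸ hd).2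
          have hyy' : ¬ hasA g1' a' := fun hh => hyy (by
            rcases hasA_iff.1 hh with ⟨d, hdm, hda⟩
            exact hasA_iff.2 ⟨d, List.mem_cons_of_mem _ hdm, hda⟩)
          rcases hv t' (Or.inl ⟨g1', f, g2, htl, hyy', haf, htf⟩) with h | h
          · exact Or.inl h
          · exact Or.inr (aft_snoc (dqAt_lt hq) h)
      · -- from memory
        dsimp only at hna hmm
        have hna' : ¬ hasA (s.sb i') a' := by
          intro hh
          apply hna
          show hasA (Function.update s.sb i' (E :: s.sb i') i') a'
          rw [hsbj, if_pos rfl]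
          exact hasA_cons.2 (Or.inr hh)
        rcases hv t' (Or.inr ⟨hna', Or.inl hmm⟩) with h | h
        · exact Or.inl h
        · exact Or.inr (aft_snoc (dqAt_lt hq) h)
      · -- from the invalidation buffer
        dsimp only at hna hd
        have hna' : ¬ hasA (s.sb i') a' := by
          intro hh
          apply hna
          show hasA (Function.update s.sb i' (E :: s.sb i') i') a'
          rw [hsbj, if_pos rfl]
          exact hasA_cons.2 (Or.inr hh)
        have hd' : d ∈ s.ib i' := (hibsub i').subset hd
        rcases hv t' (Or.inr ⟨hna', Or.inr ⟨d, hd', hda, hdt⟩⟩) with h | h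
        · exact Or.inl h
        · exact Or.inr (aft_snoc (dqAt_lt hq) h)
  · -- pc
    intro p1 p2 i' a' t1 t2 hlt h1 h2 hne
    rcases getq_snoc_cases h2 with hold2 | ⟨_, hxl⟩
    swap
    · cases hxl
    have h1' : tr[p1]? = some (TLab.load i' a' t1) := by
      rcases getq_snoc_cases h1 with h | ⟨hp1, _⟩
      · exact h
      · exfalso
        have hl2 : p2 < tr.length := by
          by_contra hc
          rw [List.getElem?_eq_none_iff.2 (le_of_not_gt hc)] at hold2
          cases hold2
        omega
    have hpc := hinv.pc p1 p2 i' a' t1 t2 hlt h1' hold2 hne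
    rcases hpc with h0 | ⟨hn1, hn2, u, e2, vv, e1, w, hd, a1, a2, a3, a4⟩ | ⟨q1, hq, ha⟩
    · exact Or.inl h0
    · refine Or.inr (Or.inl ⟨noDq_snoc hn1 tau_ne_deq, noDq_snoc hn2 tau_ne_deq, ?_⟩)
      by_cases hii : i' = i
      · subst hii
        exact ⟨E :: u, e2, vv, e1, w, by
          show Function.update s.sb i' (E :: s.sb i') i' = _
          rw [hsbj, if_pos rfl, hd]; rfl, a1, a2, a3, a4⟩
      · exact ⟨u, e2, vv, e1, w, by
          show Function.update s.sb i (E :: s.sb i) i' = _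
          rw [hsbj, if_neg hii]; exact hd, a1, a2, a3, a4⟩
    · exact Or.inr (Or.inr ⟨q1, dqAt_ext hq, aft_snoc (dqAt_lt hq) ha⟩)

lemma noDq_snoc_deq {tr : List TLab} {t u c : ℕ} (h : NoDq tr t) (hne : t ≠ u) :
    NoDq (tr ++ [TLab.deq u c]) t := by
  intro q b hd
  rcases dqAt_snoc hd with h' | ⟨_, h'⟩
  · exact h q b h'
  · injection h' with h1 _; exact hne h1.symm

lemma dqAt_last (tr : List TLab) (u c : ℕ) : DqAt (tr ++ [TLab.deq u c]) tr.length u c := by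
  show (tr ++ [TLab.deq u c])[tr.length]? = _
  rw [List.getElem?_concat_length]

lemma winv_deqSb {tr : List TLab} {s : TSt} (hinv : WInv tr s) (i : ℕ) (e : TEnt)
    (l1 l2 : List TEnt) (hsb : s.sb i = l1 ++ e :: l2) (hold : ¬ hasA l2 e.addr) :
    WInv (tr ++ [TLab.deq e.tag e.addr])
      { mem := Function.update s.mem e.addr (e.tag, e.val),
        sb := Function.update s.sb i (l1 ++ l2),
        ib := fun j => if j = i ∨ hasA (s.sb j) e.addr then s.ib j
                       else ⟨(s.mem e.addr).1, e.addr, (s.mem e.addr).2⟩ :: s.ib j,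
        next := s.next } := by
  set d0 : TEnt := ⟨(s.mem e.addr).1, e.addr, (s.mem e.addr).2⟩ with hd0
  set x : TLab := TLab.deq e.tag e.addr with hx
  have hemem : e ∈ s.sb i := by rw [hsb]; simp
  have hnd_e : NoDq tr e.tag := noDq_sb hinv hemem
  have hsbsl : (l1 ++ l2).Sublist (l1 ++ e :: l2) :=
    (List.sublist_cons_self e l2).append_left l1
  have hnd1 : ((l1 ++ e :: l2).map TEnt.tag).Nodup := by rw [← hsb]; exact hinv.w1 i
  have hne1 : ∀ d ∈ l1 ++ l2, d.tag ≠ e.tag := by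
    intro d hd hdt
    have hdmem : d ∈ l1 ++ e :: l2 := hsbsl.subset hd
    have : d = e := tag_inj hnd1 hdmem (by simp) hdt
    subst this
    -- d occurs in l1 ++ l2 while its tag is unique in l1 ++ d :: l2
    rcases List.mem_append.1 hd with h | h
    · have : ((l1.map TEnt.tag) ++ d.tag :: (l2.map TEnt.tag)).Nodup := by simpa using hnd1
      rcases List.nodup_append'.1 this with ⟨_, _, hdisj⟩
      exact hdisj (List.mem_map_of_mem (f := TEnt.tag) h) (by simp)
    · have : ((l1.map TEnt.tag) ++ d.tag :: (l2.map TEnt.tag)).Nodup := by simpa using hnd1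
      rcases List.nodup_append.1 this with ⟨_, h2, _⟩
      exact (List.nodup_cons.1 h2).1 (List.mem_map_of_mem (f := TEnt.tag) h)
  have hsbj : ∀ j, Function.update s.sb i (l1 ++ l2) j
      = if j = i then l1 ++ l2 else s.sb j := by
    intro j; by_cases hj : j = i
    · subst hj; simp
    · simp [hj]
  have hsbsub : ∀ j d, d ∈ Function.update s.sb i (l1 ++ l2) j → d ∈ s.sb j := by
    intro j d hd
    rw [hsbj] at hd
    by_cases hj : j = i
    · rw [if_pos hj] at hd; rw [hj, hsb]; exact hsbsl.subset hd
    · rw [if_neg hj] at hd; exact hd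
  have hsbtag : ∀ j d, d ∈ Function.update s.sb i (l1 ++ l2) j → d.tag ≠ e.tag := by
    intro j d hd
    rw [hsbj] at hd
    by_cases hj : j = i
    · rw [if_pos hj] at hd; exact hne1 d hd
    · rw [if_neg hj] at hd; exact hinv.w2 j i hj d hd e hemem
  have hibtag : ∀ j d, d ∈ s.ib j → d.tag ≠ e.tag := by
    intro j d hd hdt
    rcases hinv.w8a j d hd with h | ⟨q, hq⟩
    · have := (hinv.w3 i e hemem).1; omega
    · exact hnd_e q d.addr (by rw [← hdt]; exact hq)
  have hmemtag : ∀ b, (s.mem b).1 ≠ e.tag := by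
    intro b hbt
    rcases hinv.w6 b with h | ⟨q, hq⟩
    · have := (hinv.w3 i e hemem).1; omega
    · exact hnd_e q b (by rw [← hbt]; exact hq)
  have hdq_new : DqAt (tr ++ [x]) tr.length e.tag e.addr := dqAt_last tr e.tag e.addr
  have hdq_cases : ∀ {q t b}, DqAt (tr ++ [x]) q t b →
      DqAt tr q t b ∨ (q = tr.length ∧ t = e.tag ∧ b = e.addr) := by
    intro q t b hd
    rcases dqAt_snoc hd with h | ⟨h1, h2⟩
    · exact Or.inl h
    · injection h2 with h3 h4; exact Or.inr ⟨h1, h3.symm, h4.symm⟩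
  constructor
  · exact hinv.w0
  · -- w1
    intro j
    dsimp only
    rw [hsbj]
    by_cases hj : j = i
    · rw [if_pos hj]
      exact List.Nodup.sublist (hsbsl.map TEnt.tag) (by rw [← hsb]; exact hinv.w1 i)
    · rw [if_neg hj]; exact hinv.w1 j
  · -- w2
    intro j k hjk d hd d' hd' heq
    dsimp only at hd hd'
    exact hinv.w2 j k hjk d (hsbsub j d hd) d' (hsbsub k d' hd') heq
  · -- w3
    intro j d hd
    dsimp only at hd ⊢
    exact hinv.w3 j d (hsbsub j d hd)
  · -- w4
    intro q t b hdq
    dsimp only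
    rcases hdq_cases hdq with h | ⟨hq, ht, hb⟩
    · have h4 := hinv.w4 q t b h
      exact ⟨h4.1, h4.2.1, fun j d hd => h4.2.2 j d (hsbsub j d hd)⟩
    · subst ht
      exact ⟨(hinv.w3 i e hemem).1, (hinv.w3 i e hemem).2,
        fun j d hd => hsbtag j d hd⟩
  · -- w5
    intro q q' t b b' h1 h2
    rcases hdq_cases h1 with h1' | ⟨hq1, ht1, _⟩
    · rcases hdq_cases h2 with h2' | ⟨hq2, ht2, _⟩
      · exact hinv.w5 q q' t b b' h1' h2'
      · exact absurd h1' (by rw [ht2]; exact hnd_e q b)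
    · rcases hdq_cases h2 with h2' | ⟨hq2, ht2, _⟩
      · exact absurd h2' (by rw [ht1]; exact hnd_e q' b')
      · omega
  · -- w6
    intro b
    dsimp only
    by_cases hb : b = e.addr
    · subst hb
      rw [Function.update_self]
      exact Or.inr ⟨tr.length, hdq_new⟩
    · rw [Function.update_of_ne hb]
      rcases hinv.w6 b with h | ⟨q, hq⟩
      · exact Or.inl h
      · exact Or.inr ⟨q, dqAt_ext hq⟩
  · -- w7
    intro j b hb hibb
    dsimp only at hb hibb
    by_cases hj : j = i
    · subst hj
      rw [if_pos (Or.inl rfl)] at hibb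
      rw [hsbj, if_pos rfl] at hb
      have hb' : hasA (s.sb j) b := by
        rcases hasA_iff.1 hb with ⟨d, hd, hda⟩
        exact hasA_iff.2 ⟨d, by rw [hsb]; exact hsbsl.subset hd, hda⟩
      exact hinv.w7 j b hb' hibb
    · rw [hsbj, if_neg hj] at hb
      by_cases hc : j = i ∨ hasA (s.sb j) e.addr
      · rw [if_pos hc] at hibb
        exact hinv.w7 j b hb hibb
      · rw [if_neg hc] at hibb
        push_neg at hc
        by_cases hbe : b = e.addr
        · exact hc.2 (hbe ▸ hb)
        · rcases hasA_cons.1 hibb with h | h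
          · exact hbe (by rw [← h])
          · exact hinv.w7 j b hb h
  · -- w8a
    intro j d hd
    dsimp only at hd
    by_cases hc : j = i ∨ hasA (s.sb j) e.addr
    · rw [if_pos hc] at hd
      rcases hinv.w8a j d hd with h | ⟨q, hq⟩
      · exact Or.inl h
      · exact Or.inr ⟨q, dqAt_ext hq⟩
    · rw [if_neg hc] at hd
      rcases List.mem_cons.1 hd with rfl | hd
      · rcases hinv.w6 e.addr with h | ⟨q, hq⟩
        · exact Or.inl h
        · exact Or.inr ⟨q, dqAt_ext hq⟩
      · rcases hinv.w8a j d hd with h | ⟨q, hq⟩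
        · exact Or.inl h
        · exact Or.inr ⟨q, dqAt_ext hq⟩
  · -- w8b
    intro j
    dsimp only
    have hlift : ∀ d d', d ∈ s.ib j → d' ∈ s.ib j →
        (d.addr = d'.addr → ∀ q q' b b', DqAt tr q d'.tag b → DqAt tr q' d.tag b' → q < q') →
        (d.addr = d'.addr → ∀ q q' b b', DqAt (tr ++ [x]) q d'.tag b →
          DqAt (tr ++ [x]) q' d.tag b' → q < q') := by
      intro d d' hd hd' hR haddr q q' b b' h1 h2
      rcases hdq_cases h1 with h1' | ⟨_, ht1, _⟩
      · rcases hdq_cases h2 with h2' | ⟨_, ht2, _⟩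
        · exact hR haddr q q' b b' h1' h2'
        · exact absurd ht2 (hibtag j d hd)
      · exact absurd ht1 (hibtag j d' hd')
    have hbase : (s.ib j).Pairwise
        (fun d d' => d.addr = d'.addr →
          ∀ q q' b b', DqAt (tr ++ [x]) q d'.tag b → DqAt (tr ++ [x]) q' d.tag b' → q < q') :=
      List.Pairwise.imp_of_mem (fun {d d'} hd hd' h => hlift d d' hd hd' h) (hinv.w8b j)
    by_cases hc : j = i ∨ hasA (s.sb j) e.addr
    · rw [if_pos hc]; exact hbase
    · rw [if_neg hc]
      refine List.Pairwise.cons ?_ hbase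
      intro d' hd' haddr q q' b b' h1 h2
      -- d0.addr = e.addr, so d'.addr = e.addr; d0.tag is the old memory tag
      have hda : d'.addr = e.addr := by rw [← haddr]
      rcases hdq_cases h1 with h1' | ⟨_, ht1, _⟩
      · rcases hdq_cases h2 with h2' | ⟨_, ht2, _⟩
        · have := hinv.w8c j d' hd' q q' b b' h1' (by rw [hda]; exact h2')
          exact this
        · exact absurd ht2 (hmemtag e.addr)
      · exact absurd ht1 (hibtag j d' hd')
  · -- w8c
    intro j d hd q q' b b' h1 h2
    dsimp only at hd h2
    have hdmem : d = d0 ∨ d ∈ s.ib j := by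
      by_cases hc : j = i ∨ hasA (s.sb j) e.addr
      · rw [if_pos hc] at hd; exact Or.inr hd
      · rw [if_neg hc] at hd; exact List.mem_cons.1 hd
    by_cases hda : d.addr = e.addr
    · -- new memory value at this address is e.tag, dequeued exactly now
      rw [hda, Function.update_self] at h2
      have hq' : q' = tr.length := by
        rcases hdq_cases h2 with h2' | ⟨hq2, _, _⟩
        · exact absurd h2' (hnd_e q' b')
        · exact hq2
      have hq : q < tr.length := by
        rcases hdq_cases h1 with h1' | ⟨_, ht1, _⟩
        · exact dqAt_lt h1'
        · exfalso
          rcases hdmem with rfl | hdm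
          · exact hmemtag e.addr ht1
          · exact hibtag j d hdm ht1
      omega
    · rw [Function.update_of_ne hda] at h2
      rcases hdmem with rfl | hdm
      · exact absurd rfl hda
      · rcases hdq_cases h1 with h1' | ⟨_, ht1, _⟩
        · rcases hdq_cases h2 with h2' | ⟨_, ht2, _⟩
          · exact hinv.w8c j d hdm q q' b b' h1' h2'
          · exact absurd ht2 (hmemtag d.addr)
        · exact absurd ht1 (hibtag j d hdm)
  · -- kc
    intro p i' a' t hp
    rcases getq_snoc_cases hp with hold' | ⟨_, hxl⟩
    swap
    · rw [hx] at hxl; cases hxl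
    rcases hinv.kc p i' a' t hold' with h0 | ⟨hnd, e1, he1, htag, haddr⟩ | ⟨q1, hq, hv⟩
    · exact Or.inl h0
    · -- tracked load value is still pending in the store buffer
      by_cases hii : i' = i
      · subst hii
        by_cases hte : e1.tag = e.tag
        · -- the tracked store is dequeued right now: move to the third phase
          have he1e : e1 = e := tag_inj (hinv.w1 i') he1 hemem hte
          have ht' : t = e.tag := by rw [← htag, he1e]
          have ha'' : a' = e.addr := by rw [← haddr, he1e]
          refine Or.inr (Or.inr ⟨tr.length, by rw [ht', ha'']; exact hdq_new, ?_⟩)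
          intro t' hvis
          rcases hvis with ⟨g1, f, g2, hdv, hyy, haf, htf⟩ | ⟨hna, hmm | ⟨d, hdv, hda, hdt⟩⟩
          · -- from the new store buffer: tag differs from e.tag, never dequeued
            dsimp only at hdv
            right
            intro q' b' h'
            rcases hdq_cases h' with h'' | ⟨_, ht'', _⟩
            · exact absurd h'' (by
                rw [htf]
                exact noDq_sb hinv (hsbsub i' f (by rw [hdv]; simp)) q' b')
            · exact absurd (htf.symm.trans ht'') (hsbtag i' f (by rw [hdv]; simp))
          · -- new memory holds exactly the dequeued store
            dsimp only at hmm
            rw [ha'', Function.update_self] at hmm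
            exact Or.inl (by rw [hmm, ht'])
          · -- the ib of processor i' has no entries for this address
            exfalso
            dsimp only at hdv
            rw [if_pos (Or.inl rfl)] at hdv
            have : hasA (s.sb i') e.addr := hasA_iff.2 ⟨e, hemem, rfl⟩
            exact hinv.w7 i' e.addr this (hasA_iff.2 ⟨d, hdv, by rw [hda, ha'']⟩)
        · -- a different entry is dequeued: still pending
          have hne' : e1 ≠ e := fun hh => hte (by rw [hh])
          refine Or.inr (Or.inl ⟨noDq_snoc_deq hnd (by rw [← htag]; exact hte), e1, ?_, htag, haddr⟩)
          show e1 ∈ Function.update s.sb i' (l1 ++ l2) i'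
          rw [hsbj, if_pos rfl]
          exact mem_of_removed (by rw [← hsb]; exact he1) hne'
      · -- other processor dequeues: pending entry untouched
        have htne : t ≠ e.tag := by
          rw [← htag]; exact hinv.w2 i' i hii e1 he1 e hemem
        refine Or.inr (Or.inl ⟨noDq_snoc_deq hnd htne, e1, ?_, htag, haddr⟩)
        show e1 ∈ Function.update s.sb i (l1 ++ l2) i'
        rw [hsbj, if_neg hii]
        exact he1
    · -- third phase is stable
      refine Or.inr (Or.inr ⟨q1, dqAt_ext hq, ?_⟩)
      have hq1lt : q1 < tr.length := dqAt_lt hq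
      intro t' hvis
      rcases hvis with ⟨g1, f, g2, hdv, hyy, haf, htf⟩ | ⟨hna, hmm | ⟨d, hdv, hda, hdt⟩⟩
      · -- from a store buffer: never dequeued before, so fine
        dsimp only at hdv
        right
        refine aft_snoc hq1lt (aft_of_noDq ?_)
        rw [htf]
        exact noDq_sb hinv (hsbsub i' f (by rw [hdv]; simp))
      · -- from memory
        dsimp only at hmm hna
        by_cases haa : a' = e.addr
        · subst haa
          rw [Function.update_self] at hmm
          exact Or.inr (aft_snoc hq1lt (aft_of_noDq (by rw [hmm]; exact hnd_e)))
        · rw [Function.update_of_ne haa] at hmm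
          have hna' : ¬ hasA (s.sb i') a' := by
            intro hh
            apply hna
            rcases hasA_iff.1 hh with ⟨f, hf, hfa⟩
            by_cases hii : i' = i
            · subst hii
              rw [hsb] at hf
              rw [hsbj, if_pos rfl]
              refine hasA_iff.2 ⟨f, ?_, hfa⟩
              refine mem_of_removed hf ?_
              intro hfe; subst hfe; exact haa (hfa.symm)
            · rw [hsbj, if_neg hii]
              exact hasA_iff.2 ⟨f, hf, hfa⟩
          rcases hv t' (Or.inr ⟨hna', Or.inl hmm⟩) with h | h
          · exact Or.inl h
          · exact Or.inr (aft_snoc hq1lt h)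
      · -- from an invalidation buffer
        dsimp only at hdv hna
        by_cases hii : i' = i
        · subst hii
          rw [if_pos (Or.inl rfl)] at hdv
          by_cases haa : a' = e.addr
          · -- impossible: the pre-state buffer has an entry for e.addr
            exfalso
            have hce : hasA (s.sb i') e.addr := hasA_iff.2 ⟨e, hemem, rfl⟩
            exact hinv.w7 i' e.addr hce (hasA_iff.2 ⟨d, hdv, by rw [hda, haa]⟩)
          · have hna' : ¬ hasA (s.sb i') a' := by
              intro hh
              apply hna
              rcases hasA_iff.1 hh with ⟨f, hf, hfa⟩
              rw [hsb] at hf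
              rw [hsbj, if_pos rfl]
              refine hasA_iff.2 ⟨f, ?_, hfa⟩
              refine mem_of_removed hf ?_
              intro hfe; subst hfe; exact haa (hfa.symm)
            rcases hv t' (Or.inr ⟨hna', Or.inr ⟨d, hdv, hda, hdt⟩⟩) with h | h
            · exact Or.inl h
            · exact Or.inr (aft_snoc hq1lt h)
        · have hna' : ¬ hasA (s.sb i') a' := by
            intro hh
            apply hna
            rw [hsbj, if_neg hii]
            exact hh
          by_cases hc : i' = i ∨ hasA (s.sb i') e.addr
          · rw [if_pos hc] at hdv
            rcases hv t' (Or.inr ⟨hna', Or.inr ⟨d, hdv, hda, hdt⟩⟩) with h | h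
            · exact Or.inl h
            · exact Or.inr (aft_snoc hq1lt h)
          · rw [if_neg hc] at hdv
            push_neg at hc
            rcases List.mem_cons.1 hdv with rfl | hdv
            · -- the freshly inserted stale value was visible as memory before
              have haa : a' = e.addr := by rw [← hda]
              rcases hv t' (Or.inr ⟨by rw [haa]; exact hc.2, Or.inl (by rw [haa]; exact hdt)⟩) with h | h
              · exact Or.inl h
              · exact Or.inr (aft_snoc hq1lt h)
            · rcases hv t' (Or.inr ⟨hna', Or.inr ⟨d, hdv, hda, hdt⟩⟩) with h | h
              · exact Or.inl h
              · exact Or.inr (aft_snoc hq1lt h)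
  · -- pc
    intro p1 p2 i' a' t1 t2 hlt h1 h2 hne
    rcases getq_snoc_cases h2 with hold2 | ⟨_, hxl⟩
    swap
    · rw [hx] at hxl; cases hxl
    have h1' : tr[p1]? = some (TLab.load i' a' t1) := by
      rcases getq_snoc_cases h1 with h | ⟨hp1, _⟩
      · exact h
      · exfalso
        have hl2 : p2 < tr.length := by
          by_contra hcc
          rw [List.getElem?_eq_none_iff.2 (le_of_not_gt hcc)] at hold2
          cases hold2
        omega
    rcases hinv.pc p1 p2 i' a' t1 t2 hlt h1' hold2 hne with
      h0 | ⟨hn1, hn2, u, e2, vv, e1, w, hd, a1, a2, a3, a4⟩ | ⟨q1, hq, ha⟩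
    · exact Or.inl h0
    · by_cases hii : i' = i
      · subst hii
        have he1mem : e1 ∈ s.sb i' := by rw [hd]; simp
        have he2mem : e2 ∈ s.sb i' := by rw [hd]; simp
        have hshape : l1 ++ e :: l2 = u ++ e2 :: (vv ++ e1 :: w) := by
          rw [← hsb, hd]; simp
        by_cases h2t : e.tag = t2
        · -- would dequeue the newer store while the older one is still buffered
          exfalso
          obtain ⟨hl1u, hee2, hl2v⟩ :=
            splitAlign l1 u e e2 l2 (vv ++ e1 :: w) hnd1 hshape (by rw [h2t, a3])
          apply hold
          refine hasA_iff.2 ⟨e1, ?_, ?_⟩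
          · rw [hl2v]; simp
          · rw [a2, ← a4, ← hee2]
        by_cases h1t : e.tag = t1
        · -- the older tracked store is dequeued now: move to the third phase
          have hee1 : e = e1 := tag_inj hnd1 (by simp) (by rw [hshape]; simp) (by rw [h1t, a1])
          refine Or.inr (Or.inr ⟨tr.length, ?_, ?_⟩)
          · rw [show t1 = e.tag from h1t.symm, show a' = e.addr by rw [← a2, ← hee1]]
            exact hdq_new
          · intro q' b' h'
            rcases hdq_cases h' with h'' | ⟨_, ht'', _⟩
            · exact absurd h'' (hn2 q' b')
            · exact absurd (h2t (ht''.symm)).elim id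
        · -- an unrelated entry is dequeued: the pair keeps its shape
          have hne2 : e ≠ e2 := fun hh => h2t (by rw [hh, a3])
          have hne1' : e ≠ e1 := fun hh => h1t (by rw [hh, a1])
          have hemem' : e ∈ u ++ e2 :: (vv ++ e1 :: w) := by rw [← hshape]; simp
          have hgoal : ∃ u' v' w', l1 ++ l2 = u' ++ e2 :: v' ++ e1 :: w' := by
            rcases List.mem_append.1 hemem' with heu | hrest
            · rcases List.append_of_mem heu with ⟨xs, ys, rfl⟩
              have hsh2 : l1 ++ e :: l2 = xs ++ e :: (ys ++ e2 :: (vv ++ e1 :: w)) := by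
                rw [hshape]; simp
              obtain ⟨hh1, _, hh2⟩ := splitAlign l1 xs e e l2 _ hnd1 hsh2 rfl
              exact ⟨xs ++ ys, vv, w, by rw [hh1, hh2]; simp⟩
            rcases List.mem_cons.1 hrest with rfl | hrest
            · exact absurd rfl hne2
            rcases List.mem_append.1 hrest with hev | hrest2
            · rcases List.append_of_mem hev with ⟨xs, ys, rfl⟩
              have hsh2 : l1 ++ e :: l2 = (u ++ e2 :: xs) ++ e :: (ys ++ e1 :: w) := by
                rw [hshape]; simp
              obtain ⟨hh1, _, hh2⟩ := splitAlign l1 (u ++ e2 :: xs) e e l2 _ hnd1 hsh2 rfl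
              exact ⟨u, xs ++ ys, w, by rw [hh1, hh2]; simp⟩
            rcases List.mem_cons.1 hrest2 with rfl | hw
            · exact absurd rfl hne1'
            · rcases List.append_of_mem hw with ⟨xs, ys, rfl⟩
              have hsh2 : l1 ++ e :: l2 = (u ++ e2 :: vv ++ e1 :: xs) ++ e :: ys := by
                rw [hshape]; simp
              obtain ⟨hh1, _, hh2⟩ := splitAlign l1 (u ++ e2 :: vv ++ e1 :: xs) e e l2 _ hnd1 hsh2 rfl
              exact ⟨u, vv, xs ++ ys, by rw [hh1, hh2]; simp⟩
          obtain ⟨u', v', w', hshape'⟩ := hgoal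
          refine Or.inr (Or.inl ⟨noDq_snoc_deq hn1 (fun hh => h1t hh.symm),
            noDq_snoc_deq hn2 (fun hh => h2t hh.symm), u', e2, v', e1, w', ?_, a1, a2, a3, a4⟩)
          show Function.update s.sb i' (l1 ++ l2) i' = _
          rw [hsbj, if_pos rfl]
          exact hshape'
      · -- other processor: tags differ from the dequeued one
        have ht1e : t1 ≠ e.tag := by
          rw [← a1]; exact hinv.w2 i' i hii e1 (by rw [hd]; simp) e hemem
        have ht2e : t2 ≠ e.tag := by
          rw [← a3]; exact hinv.w2 i' i hii e2 (by rw [hd]; simp) e hemem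
        refine Or.inr (Or.inl ⟨noDq_snoc_deq hn1 ht1e, noDq_snoc_deq hn2 ht2e,
          u, e2, vv, e1, w, ?_, a1, a2, a3, a4⟩)
        show Function.update s.sb i (l1 ++ l2) i' = _
        rw [hsbj, if_neg hii]
        exact hd
    · exact Or.inr (Or.inr ⟨q1, dqAt_ext hq, aft_snoc (dqAt_lt hq) ha⟩)

lemma winv_init (m0 : ℕ → ℕ) : WInv [] (TInit m0) := by
  constructor
  · exact le_refl 1
  · intro j; simp [TInit]
  · intro j k _ d hd; simp [TInit] at hd
  · intro j d hd; simp [TInit] at hd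
  · intro q t b hdq; cases hdq
  · intro q q' t b b' h1 _; cases h1
  · intro b; exact Or.inl rfl
  · intro j b _ hb; simp [TInit, hasA] at hb
  · intro j d hd; simp [TInit] at hd
  · intro j; simp [TInit]
  · intro j d hd; simp [TInit] at hd
  · intro p i a t hp; cases hp
  · intro p1 p2 i a t1 t2 _ h1 _ _; cases h1

lemma winv_step {s s' : TSt} {l : TLab} {tr : List TLab}
    (h : TStep s l s') (hinv : WInv tr s) : WInv (tr ++ [l]) s' := by
  cases h with
  | store i a v => exact winv_store hinv i a v
  | ldSb i e l1 l2 hsb hy => exact winv_ldSb hinv i e l1 l2 hsb hy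
  | ldMem i a h => exact winv_ldMem hinv i a h
  | ldIb i e l1 l2 h hib => exact winv_ldIb hinv i e l1 l2 h hib
  | commit i h => exact winv_commit hinv
  | reconcile i => exact winv_reconcile hinv i
  | deqSb i e l1 l2 hsb hold => exact winv_deqSb hinv i e l1 l2 hsb hold

lemma winv_steps {s s' : TSt} {ls : List TLab} (h : TSteps s ls s') :
    ∀ tr, WInv tr s → WInv (tr ++ ls) s' := by
  induction h with
  | nil s => intro tr h; simpa using h
  | cons hstep hrest ih =>
    intro tr h
    have h2 := ih (tr ++ [_]) (winv_step hstep h)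
    simpa using h2

/-- per-location SC for same-address load pairs in the WMM I²E
machine: if a processor performs two loads to the same address, the first
reading store `t1` and the second reading a different store `t2`, then in the
per-address order in which stores update the atomic memory, `t1` precedes
`t2`: the dequeue of `t1` occurs before the dequeue of `t2` in the trace. -/
theorem wmm_per_location_sc_loads (m0 : ℕ → ℕ) (tr : List TLab) (s : TSt)
    (h : TSteps (TInit m0) tr s) :
    ∀ i a t1 t2 (p1 p2 : ℕ), p1 < p2 →
      tr[p1]? = some (.load i a t1) →
      tr[p2]? = some (.load i a t2) →
      t1 ≠ t2 →
      ∀ (q1 q2 : ℕ), tr[q1]? = some (.deq t1 a) → tr[q2]? = some (.deq t2 a) →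
        q1 < q2 := by
  have hinv : WInv tr s := by
    have := winv_steps h [] (winv_init m0)
    simpa using this
  intro i a t1 t2 p1 p2 hlt h1 h2 hne q1 q2 hq1 hq2
  rcases hinv.pc p1 p2 i a t1 t2 hlt h1 h2 hne with
    h0 | ⟨hn1, _, _⟩ | ⟨q1', hq', ha⟩
  · have := (hinv.w4 q1 t1 a hq1).1
    omega
  · exact absurd hq1 (hn1 q1 a)
  · have : q1 = q1' := hinv.w5 q1 q1' t1 a a hq1 hq'
    rw [this]
    exact ha q2 a hq2
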